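/- Let K ≥ 2 and let x_1, …, x_{2K−2} be nonnegative integers with even sum W. Consider the instance with 3 bidders and 2K items e_1, e_2, f_1, …, f_{2K−2}, where bidder 1 values e_1 at W/2, bidder 2 values e_2 at W/2, bidder 3 values f_i at x_i for each i, and all other valuations are 0. Then there exists a K-anonymous scheme with revenue at least W if and only if there exists a subset T ⊆ {1, …, 2K−2} with |T| = K − 1 and ∑_{i∈T} x_i = W/2. (Moreover W is always an upper bound on the revenue of any scheme of this instance, so the optimal K-anonymous revenue equals W exactly when such a subset exists.) -/

import Mathlib

open Finset

/-- The second-highest of the values `w 0, …, w (n-1)` (for `n ≥ 2`):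
the minimum over `i` of the maximum of the values with index `≠ i`. -/
noncomputable def secondPrice {n : ℕ} (w : Fin n → ℝ) : ℝ :=
  ⨅ i, ⨆ k : {k : Fin n // k ≠ i}, w (k : Fin n)

/-- The revenue of a bundling scheme `P`: the sum over bundles of the
second-highest value, among the bidders, for the bundle. -/
noncomputable def revenue {n m : ℕ} (V : Fin n → Fin m → ℝ)
    (P : Finpartition (univ : Finset (Fin m))) : ℝ :=
  ∑ b ∈ P.parts, secondPrice fun i => ∑ j ∈ b, V i j

/-- A scheme is `K`-anonymous if every bundle contains at least `K` items. -/
def KAnonymous {m : ℕ} (K : ℕ) (P : Finpartition (univ : Finset (Fin m))) : Prop :=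
  ∀ b ∈ P.parts, K ≤ b.card

/-- The hardness-reduction instance: `3` bidders and `2K` items
`e₁, e₂, f₁, …, f_{2K-2}` (item `0` is `e₁`, item `1` is `e₂`, item `j ≥ 2`
is `f_{j-1}`).  Bidder `0` values `e₁` at `W/2`, bidder `1` values `e₂` at
`W/2`, bidder `2` values `f_i` at `x i`, all other values are `0`. -/
noncomputable def hardV (K : ℕ) (x : Fin (2 * K - 2) → ℕ) (W : ℕ) :
    Fin 3 → Fin (2 * K) → ℝ :=
  fun i j =>
    if i = 0 then (if (j : ℕ) = 0 then (W : ℝ) / 2 else 0)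
    else if i = 1 then (if (j : ℕ) = 1 then (W : ℝ) / 2 else 0)
    else if h : 2 ≤ (j : ℕ) then
      (x ⟨(j : ℕ) - 2, by have := j.isLt; omega⟩ : ℝ)
    else 0

lemma sp_le {w : Fin 3 → ℝ} {c : ℝ} (i : Fin 3) (h : ∀ k, k ≠ i → w k ≤ c) :
    secondPrice w ≤ c := by
  obtain ⟨k, hk⟩ : ∃ k : Fin 3, k ≠ i := by
    rcases Fin.eq_zero_or_eq_succ i with rfl | ⟨j, rfl⟩
    · exact ⟨1, by decide⟩
    · exact ⟨0, (Fin.succ_ne_zero j).symm⟩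
  have hne : Nonempty {k : Fin 3 // k ≠ i} := ⟨⟨k, hk⟩⟩
  calc secondPrice w ≤ ⨆ k : {k : Fin 3 // k ≠ i}, w (k : Fin 3) :=
        ciInf_le (Finite.bddBelow_range _) i
    _ ≤ c := ciSup_le fun k => h k k.2

lemma le_sp {w : Fin 3 → ℝ} {c : ℝ} (j j' : Fin 3) (hjj : j ≠ j')
    (hj : c ≤ w j) (hj' : c ≤ w j') : c ≤ secondPrice w := by
  refine le_ciInf fun i => ?_
  have h : ∃ k : Fin 3, k ≠ i ∧ c ≤ w k := by
    rcases eq_or_ne j i with rfl | h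
    · exact ⟨j', fun h => hjj h.symm, hj'⟩
    · exact ⟨j, h, hj⟩
  rcases h with ⟨k, hk, hck⟩
  have hne : Nonempty {k : Fin 3 // k ≠ i} := ⟨⟨k, hk⟩⟩
  have := le_ciSup (f := fun k : {k : Fin 3 // k ≠ i} => w (k : Fin 3))
    (Finite.bddAbove_range _) ⟨k, hk⟩
  exact hck.trans this

lemma fin3cases : ∀ k : Fin 3, k ≠ 2 → k = 0 ∨ k = 1 := by decide

set_option maxHeartbeats 2000000 in
/-- Let `K ≥ 2` and let `x 1, …, x (2K-2)` be nonnegative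
integers with even sum `W`; consider the instance `hardV K x W`.  Then `W`
is an upper bound on the revenue of every scheme, and there is a
`K`-anonymous scheme with revenue at least `W` if and only if there is a set
`T` of `K - 1` of the indices with `∑ i ∈ T, x i = W / 2`. -/
theorem stmt7 (K : ℕ) (hK : 2 ≤ K) (x : Fin (2 * K - 2) → ℕ) (W : ℕ)
    (hW : ∑ i, x i = W) (hEven : Even W) :
    (∀ P : Finpartition (univ : Finset (Fin (2 * K))),
      revenue (hardV K x W) P ≤ (W : ℝ)) ∧
    ((∃ P : Finpartition (univ : Finset (Fin (2 * K))),
        KAnonymous K P ∧ (W : ℝ) ≤ revenue (hardV K x W) P) ↔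
     (∃ T : Finset (Fin (2 * K - 2)), T.card = K - 1 ∧ 2 * ∑ i ∈ T, x i = W)) := by
  have hWnn : (0:ℝ) ≤ (W:ℝ) := Nat.cast_nonneg _
  set z0 : Fin (2*K) := ⟨0, by omega⟩ with hz0def
  set z1 : Fin (2*K) := ⟨1, by omega⟩ with hz1def
  set emb : Fin (2*K-2) → Fin (2*K) :=
    fun i => ⟨(i:ℕ)+2, by have := i.isLt; omega⟩ with hembdef
  have embinj : Function.Injective emb := by
    intro a b h
    rw [Fin.ext_iff] at h ⊢
    simpa [emb] using h
  -- pointwise evaluations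
  have hv0 : ∀ j, hardV K x W 0 j = if (j:ℕ) = 0 then (W:ℝ)/2 else 0 :=
    fun j => by simp [hardV]
  have hv1 : ∀ j, hardV K x W 1 j = if (j:ℕ) = 1 then (W:ℝ)/2 else 0 :=
    fun j => by simp [hardV]
  have hv2 : ∀ j : Fin (2*K), hardV K x W 2 j
      = if h : 2 ≤ (j:ℕ) then (x ⟨(j:ℕ) - 2, by have := j.isLt; omega⟩ : ℝ) else 0 := by
    intro j
    simp only [hardV]
    rw [if_neg (by decide : ¬(2:Fin 3) = 0), if_neg (by decide : ¬(2:Fin 3) = 1)]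
  have hv2nn : ∀ j, 0 ≤ hardV K x W 2 j := by
    intro j
    rw [hv2]
    split <;> positivity
  -- bundle sums for bidders 0 and 1
  have hsum0 : ∀ b : Finset (Fin (2*K)),
      (∑ j ∈ b, hardV K x W 0 j) = if z0 ∈ b then (W:ℝ)/2 else 0 := by
    intro b
    have : ∀ j ∈ b, hardV K x W 0 j = if j = z0 then (W:ℝ)/2 else 0 := by
      intro j _
      rw [hv0]
      congr 1
      simp [Fin.ext_iff, z0]
    rw [Finset.sum_congr rfl this, Finset.sum_ite_eq' b z0 (fun _ => (W:ℝ)/2)]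
  have hsum1 : ∀ b : Finset (Fin (2*K)),
      (∑ j ∈ b, hardV K x W 1 j) = if z1 ∈ b then (W:ℝ)/2 else 0 := by
    intro b
    have : ∀ j ∈ b, hardV K x W 1 j = if j = z1 then (W:ℝ)/2 else 0 := by
      intro j _
      rw [hv1]
      congr 1
      simp [Fin.ext_iff, z1]
    rw [Finset.sum_congr rfl this, Finset.sum_ite_eq' b z1 (fun _ => (W:ℝ)/2)]
  -- bundle sums for bidder 2
  have key2 : ∀ b : Finset (Fin (2*K)),
      (∑ j ∈ b, hardV K x W 2 j)
        = ∑ i ∈ univ.filter (fun i => emb i ∈ b), (x i : ℝ) := by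
    intro b
    have hfe : b.filter (fun j : Fin (2*K) => 2 ≤ (j:ℕ))
        = (univ.filter (fun i => emb i ∈ b)).image emb := by
      ext j
      simp only [mem_filter, mem_image, mem_univ, true_and]
      constructor
      · rintro ⟨hjb, hj2⟩
        refine ⟨⟨(j:ℕ) - 2, by have := j.isLt; omega⟩, ?_, ?_⟩
        · convert hjb using 1
          rw [Fin.ext_iff]
          simp [emb]
          omega
        · rw [Fin.ext_iff]
          simp [emb]
          omega
      · rintro ⟨i, hib, rfl⟩
        exact ⟨hib, by simp [emb]⟩
    have hzero : ∀ j ∈ b, hardV K x W 2 j ≠ 0 → 2 ≤ (j:ℕ) := by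
      intro j _ hne
      by_contra h2
      exact hne (by rw [hv2, dif_neg h2])
    rw [← Finset.sum_filter_of_ne hzero, hfe,
      Finset.sum_image (fun a _ b _ h => embinj h)]
    refine Finset.sum_congr rfl fun i _ => ?_
    rw [hv2, dif_pos (by simp [emb] : 2 ≤ ((emb i : Fin (2*K)) : ℕ))]
    norm_num
    exact congrArg x (Fin.ext (by simp [emb]))
  have total2 : (∑ j ∈ univ, hardV K x W 2 j) = (W:ℝ) := by
    rw [key2]
    simp only [mem_univ, filter_true]
    rw [← Nat.cast_sum, hW]
  -- partition sums
  have hsplit : ∀ (P : Finpartition (univ : Finset (Fin (2 * K)))) (i : Fin 3),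
      (∑ b ∈ P.parts, ∑ j ∈ b, hardV K x W i j) = ∑ j ∈ univ, hardV K x W i j := by
    intro P i
    conv_rhs => rw [← P.biUnion_parts]
    rw [Finset.sum_biUnion P.disjoint]
    rfl
  -- the upper bound
  have upper : ∀ P : Finpartition (univ : Finset (Fin (2 * K))),
      revenue (hardV K x W) P ≤ (W : ℝ) := by
    intro P
    have hb : ∀ b ∈ P.parts,
        secondPrice (fun i => ∑ j ∈ b, hardV K x W i j)
          ≤ (∑ j ∈ b, hardV K x W 0 j) + (∑ j ∈ b, hardV K x W 1 j) := by
      intro b _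
      refine sp_le 2 fun k hk => ?_
      have h0nn : (0:ℝ) ≤ ∑ j ∈ b, hardV K x W 0 j := by
        rw [hsum0]; split <;> positivity
      have h1nn : (0:ℝ) ≤ ∑ j ∈ b, hardV K x W 1 j := by
        rw [hsum1]; split <;> positivity
      rcases fin3cases k hk with rfl | rfl
      · linarith
      · linarith
    calc revenue (hardV K x W) P
        ≤ ∑ b ∈ P.parts, ((∑ j ∈ b, hardV K x W 0 j) + (∑ j ∈ b, hardV K x W 1 j)) :=
          Finset.sum_le_sum hb
      _ = (∑ j ∈ univ, hardV K x W 0 j) + (∑ j ∈ univ, hardV K x W 1 j) := by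
          rw [Finset.sum_add_distrib, hsplit P 0, hsplit P 1]
      _ = (W:ℝ) := by
          rw [hsum0, hsum1, if_pos (mem_univ z0), if_pos (mem_univ z1)]
          ring
  refine ⟨upper, ?_, ?_⟩
  · -- forward direction
    rintro ⟨P, hanon, hrev⟩
    rcases Nat.eq_zero_or_pos W with hW0 | hWpos
    · -- W = 0 : all x are 0
      subst hW0
      have hx0 : ∀ i ∈ (univ : Finset (Fin (2*K-2))), x i = 0 := by
        intro i _
        have := (Finset.sum_eq_zero_iff).mp hW i (mem_univ i)
        exact this
      obtain ⟨T, _, hTcard⟩ := Finset.exists_subset_card_eq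
        (s := (univ : Finset (Fin (2*K-2)))) (n := K-1) (by simp; omega)
      refine ⟨T, hTcard, ?_⟩
      rw [Finset.sum_eq_zero (fun i hi => hx0 i (mem_univ i)), Nat.mul_zero]
    · have hWR : (0:ℝ) < (W:ℝ) := by exact_mod_cast hWpos
      obtain ⟨b0, hb0P, hz0b0⟩ := P.exists_mem (mem_univ z0)
      obtain ⟨b1, hb1P, hz1b1⟩ := P.exists_mem (mem_univ z1)
      -- bound on a part not containing z0 nor z1
      have hsmall : ∀ b ∈ P.parts, z0 ∉ b → z1 ∉ b →
          secondPrice (fun i => ∑ j ∈ b, hardV K x W i j) ≤ 0 := by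
        intro b _ h0 h1
        refine sp_le 2 fun k hk => ?_
        rcases fin3cases k hk with rfl | rfl
        · rw [hsum0, if_neg h0]
        · rw [hsum1, if_neg h1]
      have hhalf : ∀ b ∈ P.parts,
          secondPrice (fun i => ∑ j ∈ b, hardV K x W i j) ≤ (W:ℝ)/2 := by
        intro b _
        refine sp_le 2 fun k hk => ?_
        rcases fin3cases k hk with rfl | rfl
        · rw [hsum0]; split
          · exact le_rfl
          · positivity
        · rw [hsum1]; split
          · exact le_rfl
          · positivity
      have hneq : b0 ≠ b1 := by
        intro heq
        subst heq
        have : revenue (hardV K x W) P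
            ≤ secondPrice (fun i => ∑ j ∈ b0, hardV K x W i j)
              + ∑ b ∈ P.parts.erase b0, (0:ℝ) := by
          rw [revenue, ← Finset.add_sum_erase _ _ hb0P]
          refine add_le_add le_rfl (Finset.sum_le_sum fun b hb => ?_)
          refine hsmall b (mem_of_mem_erase hb) ?_ ?_
          · intro hz
            exact (ne_of_mem_erase hb) (P.eq_of_mem_parts (mem_of_mem_erase hb) hb0P hz hz0b0)
          · intro hz
            exact (ne_of_mem_erase hb) (P.eq_of_mem_parts (mem_of_mem_erase hb) hb0P hz hz1b1)
        rw [Finset.sum_const_zero, add_zero] at this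
        have := le_trans hrev (le_trans this (hhalf b0 hb0P))
        linarith
      have hz1b0 : z1 ∉ b0 := fun h => hneq (P.eq_of_mem_parts hb0P hb1P h hz1b1)
      have hz0b1 : z0 ∉ b1 := fun h => hneq.symm (P.eq_of_mem_parts hb1P hb0P h hz0b0)
      -- second prices of b0, b1 bounded by bidder 2 values
      have hsec0v2 : secondPrice (fun i => ∑ j ∈ b0, hardV K x W i j)
          ≤ ∑ j ∈ b0, hardV K x W 2 j := by
        refine sp_le 0 fun k hk => ?_
        have : k = 1 ∨ k = 2 := by revert hk; revert k; decide
        rcases this with rfl | rfl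
        · rw [hsum1, if_neg hz1b0]
          exact Finset.sum_nonneg fun j _ => hv2nn j
        · exact le_rfl
      have hsec1v2 : secondPrice (fun i => ∑ j ∈ b1, hardV K x W i j)
          ≤ ∑ j ∈ b1, hardV K x W 2 j := by
        refine sp_le 1 fun k hk => ?_
        have : k = 0 ∨ k = 2 := by revert hk; revert k; decide
        rcases this with rfl | rfl
        · rw [hsum0, if_neg hz0b1]
          exact Finset.sum_nonneg fun j _ => hv2nn j
        · exact le_rfl
      -- revenue bounded by sum of the two second prices
      have hdisj01 : Disjoint b0 b1 := P.disjoint hb0P hb1P hneq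
      have hrev2 : revenue (hardV K x W) P
          ≤ secondPrice (fun i => ∑ j ∈ b0, hardV K x W i j)
            + secondPrice (fun i => ∑ j ∈ b1, hardV K x W i j) := by
      
        have hsub : ({b0, b1} : Finset (Finset (Fin (2*K)))) ⊆ P.parts := by
          intro b hb
          rcases mem_insert.mp hb with rfl | hb
          · exact hb0P
          · exact (mem_singleton.mp hb) ▸ hb1P
        rw [revenue, ← Finset.sum_sdiff hsub, Finset.sum_pair hneq]
        have : (∑ b ∈ P.parts \ {b0, b1},
            secondPrice (fun i => ∑ j ∈ b, hardV K x W i j)) ≤ 0 := by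
          refine Finset.sum_nonpos fun b hb => ?_
          have hbP := (mem_sdiff.mp hb).1
          have hbne := (mem_sdiff.mp hb).2
          simp only [mem_insert, mem_singleton, not_or] at hbne
          refine hsmall b hbP ?_ ?_
          · intro hz; exact hbne.1 (P.eq_of_mem_parts hbP hb0P hz hz0b0)
          · intro hz; exact hbne.2 (P.eq_of_mem_parts hbP hb1P hz hz1b1)
        linarith
      have hv2sum : (∑ j ∈ b0, hardV K x W 2 j) + (∑ j ∈ b1, hardV K x W 2 j)
          ≤ (W:ℝ) := by
        rw [← Finset.sum_union hdisj01, ← total2]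
        exact Finset.sum_le_sum_of_subset_of_nonneg (subset_univ _)
          (fun j _ _ => hv2nn j)
      have hv2b0 : (∑ j ∈ b0, hardV K x W 2 j) = (W:ℝ)/2 := by
        have h1 := hhalf b0 hb0P
        have h2 := hhalf b1 hb1P
        have h3 := hsec0v2
        have h4 := hsec1v2
        have h5 := le_trans hrev hrev2
        linarith
      -- cardinalities
      have hcard : b0.card = K := by
        have h0 : K ≤ b0.card := hanon b0 hb0P
        have h1 : K ≤ b1.card := hanon b1 hb1P
        have h2 : b0.card + b1.card ≤ 2*K := by
          rw [← Finset.card_union_of_disjoint hdisj01]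
          calc (b0 ∪ b1).card ≤ (univ : Finset (Fin (2*K))).card :=
                Finset.card_le_card (subset_univ _)
            _ = 2*K := by simp
        omega
      -- the subset T
      refine ⟨univ.filter (fun i => emb i ∈ b0), ?_, ?_⟩
      · have himg : (univ.filter (fun i => emb i ∈ b0)).image emb = b0.erase z0 := by
          ext j
          simp only [mem_image, mem_filter, mem_univ, true_and, mem_erase]
          constructor
          · rintro ⟨i, hib, rfl⟩
            refine ⟨?_, hib⟩
            simp [Fin.ext_iff, emb, z0]
          · rintro ⟨hjz, hjb⟩
            have hj1 : j ≠ z1 := fun h => hz1b0 (h ▸ hjb)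
            have hj2 : 2 ≤ (j:ℕ) := by
              simp [Fin.ext_iff, z0, z1] at hjz hj1
              omega
            refine ⟨⟨(j:ℕ)-2, by have := j.isLt; omega⟩, ?_, ?_⟩
            · convert hjb using 1
              rw [Fin.ext_iff]; simp [emb]; omega
            · rw [Fin.ext_iff]; simp [emb]; omega
        have := congrArg Finset.card himg
        rw [Finset.card_image_of_injective _ embinj,
          Finset.card_erase_of_mem hz0b0, hcard] at this
        exact this
      · have : (↑(2 * ∑ i ∈ univ.filter (fun i => emb i ∈ b0), x i) : ℝ) = (W:ℝ) := by
          push_cast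
          rw [← key2 b0, hv2b0]
          ring
        exact_mod_cast this
  · -- backward direction
    rintro ⟨T, hTcard, hTsum⟩
    have hhalfR : (∑ i ∈ T, (x i : ℝ)) = (W:ℝ)/2 := by
      have h2 : 2 * (∑ i ∈ T, (x i : ℝ)) = (W:ℝ) := by exact_mod_cast hTsum
      linarith
    set B : Finset (Fin (2*K)) := insert z0 (T.image emb) with hBdef
    have hz0B : z0 ∈ B := mem_insert_self _ _
    have hz0nimg : z0 ∉ T.image emb := by
      simp only [mem_image]
      rintro ⟨i, _, hi⟩
      rw [Fin.ext_iff] at hi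
      simp [emb, z0] at hi
    have hz1B : z1 ∉ B := by
      simp only [hBdef, mem_insert, mem_image]
      rintro (h | ⟨i, _, hi⟩)
      · rw [Fin.ext_iff] at h; simp [z0, z1] at h
      · rw [Fin.ext_iff] at hi; simp [emb, z1] at hi
    have hBcard : B.card = K := by
      rw [hBdef, Finset.card_insert_of_notMem hz0nimg,
        Finset.card_image_of_injective _ embinj, hTcard]
      omega
    have hBccard : Bᶜ.card = K := by
      rw [Finset.card_compl, hBcard]
      simp
      omega
    have hBne : B ≠ Bᶜ := by
      intro h
      have := hz0B
      rw [h, Finset.mem_compl] at this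
      exact this hz0B
    refine ⟨⟨{B, Bᶜ}, ?_, ?_, ?_⟩, ?_, ?_⟩
    · exact (Finset.supIndep_pair hBne).mpr disjoint_compl_right
    · simp [Finset.sup_insert, Finset.sup_singleton, Finset.sup_eq_union]
    · simp only [mem_insert, mem_singleton, bot_eq_empty]
      push_neg
      constructor
      · intro h
        rw [← h] at hz0B
        exact notMem_empty _ hz0B
      · intro h
        have hz1c : z1 ∈ Bᶜ := Finset.mem_compl.mpr hz1B
        rw [← h] at hz1c
        exact notMem_empty _ hz1c
    · intro b hb
      rcases mem_insert.mp hb with rfl | hb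
      · rw [hBcard]
      · rw [mem_singleton.mp hb, hBccard]
    · have hfB : univ.filter (fun i => emb i ∈ B) = T := by
        ext i
        simp only [mem_filter, mem_univ, true_and, hBdef, mem_insert]
        constructor
        · rintro (h | h)
          · rw [Fin.ext_iff] at h; simp [emb, z0] at h
          · exact (embinj.mem_finset_image).mp h
        · intro h
          exact Or.inr (Finset.mem_image_of_mem _ h)
      have hfBc : univ.filter (fun i => emb i ∈ Bᶜ) = Tᶜ := by
        ext i
        simp only [mem_filter, mem_univ, true_and, Finset.mem_compl]
        rw [← hfB]
        simp
      have hsumTc : (∑ i ∈ Tᶜ, (x i : ℝ)) = (W:ℝ)/2 := by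
        have htot : (∑ i ∈ T, (x i:ℝ)) + ∑ i ∈ Tᶜ, (x i:ℝ) = (W:ℝ) := by
          rw [Finset.sum_add_sum_compl]
          rw [← Nat.cast_sum, hW]
        linarith
      have hsecB : (W:ℝ)/2 ≤ secondPrice (fun i => ∑ j ∈ B, hardV K x W i j) := by
        refine le_sp 0 2 (by decide) ?_ ?_
        · rw [hsum0, if_pos hz0B]
        · rw [key2, hfB, hhalfR]
      have hsecBc : (W:ℝ)/2 ≤ secondPrice (fun i => ∑ j ∈ Bᶜ, hardV K x W i j) := by
        refine le_sp 1 2 (by decide) ?_ ?_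
        · rw [hsum1, if_pos (Finset.mem_compl.mpr hz1B)]
        · rw [key2, hfBc, hsumTc]
      rw [revenue]
      simp only
      rw [Finset.sum_pair hBne]
      linarith
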